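/- Let $q$ be a prime power with $\gcd(q, n) = 1$, where $n = n_1 n_2$ as in the Whiteman generalized cyclotomy of order 6, and suppose $q \bmod n \in D_1 \cup D_3 \cup D_5$. Let $\beta$ be a primitive $n$-th root of unity in an extension of $\mathrm{GF}(q)$ and $S(X) = \sum_{i \in N_1 \cup D_0 \cup D_1 \cup D_2} X^i$. Then $S(\beta)$ satisfies $S(\beta)^{q^3} + S(\beta) + 1 = 0$, and consequently $S(\beta) \notin \{0, -1\}$. -/

import Mathlib

open Finset Polynomial

/-- The Whiteman generalized cyclotomic class `D_i` of order 6 modulo `n = n1 * n2`,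
given a common primitive root `g` and the CRT element `x`. -/
def whitemanD (n1 n2 g x : ℕ) (i : ℕ) : Finset ℕ :=
  (Finset.range ((n1 - 1) * (n2 - 1) / 6)).image (fun s => g ^ s * x ^ i % (n1 * n2))

/-- The set `{k * a : 1 ≤ k ≤ b - 1}` of nonzero multiples of `a` below `a * b`. -/
def multSet (a b : ℕ) : Finset ℕ :=
  (Finset.Icc 1 (b - 1)).image (fun k => k * a)

/-- The index set of the generator polynomial `S(x)`: `N1 ∪ D0 ∪ D1 ∪ D2`. -/
def whitemanSIdx (n1 n2 g x : ℕ) : Finset ℕ :=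
  multSet n1 n2 ∪ whitemanD n1 n2 g x 0 ∪ whitemanD n1 n2 g x 1 ∪ whitemanD n1 n2 g x 2

private lemma wh_pow_mod_of_pow_eq_one {M : Type*} [Monoid M] {a : M} {E : ℕ} (h : a ^ E = 1)
    (s : ℕ) : a ^ (s % E) = a ^ s := by
  conv_rhs => rw [← Nat.mod_add_div s E]
  rw [pow_add, pow_mul, h, one_pow, mul_one]

private lemma wh_exists_pow_mul_eq_one {M : Type*} [Monoid M] {a : M} {E : ℕ} (h : a ^ E = 1)
    (hE : 0 < E) (s : ℕ) : ∃ t : ℕ, a ^ s * a ^ t = 1 := by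
  refine ⟨E - s % E, ?_⟩
  have h1 : s % E < E := Nat.mod_lt _ hE
  have h2 : s % E + E * (s / E) = s := Nat.mod_add_div s E
  have h3 : s + (E - s % E) = E * (s / E) + E := by omega
  rw [← pow_add, h3, pow_add, pow_mul, h, one_pow, one_mul]

private lemma wh_exists_pow_eq_of_orderOf_eq_card {G : Type*} [Group G] [Fintype G] (u : G)
    (h : orderOf u = Fintype.card G) (w : G) : ∃ k : ℕ, u ^ k = w := by
  have h1 : Nat.card (Subgroup.zpowers u) = Nat.card G := by
    rw [Nat.card_zpowers, h, Nat.card_eq_fintype_card]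
  have htop : Subgroup.zpowers u = ⊤ := by
    rwa [Subgroup.card_eq_iff_eq_top] at h1
  have hw : w ∈ Subgroup.zpowers u := htop ▸ Subgroup.mem_top w
  obtain ⟨k, hk⟩ := mem_powers_iff_mem_zpowers.mpr hw
  exact ⟨k, hk⟩

theorem S_beta_cubic_of_q_in_D135
    (n1 n2 : ℕ) (hp1 : n1.Prime) (hp2 : n2.Prime) (hne : n1 ≠ n2)
    (ho1 : Odd n1) (ho2 : Odd n2)
    (hgcd : Nat.gcd (n1 - 1) (n2 - 1) = 6)
    (g x : ℕ)
    (hg1 : orderOf (g : ZMod n1) = n1 - 1)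
    (hg2 : orderOf (g : ZMod n2) = n2 - 1)
    (hx1 : x % n1 = g % n1) (hx2 : x % n2 = 1 % n2)
    (q : ℕ) (F K : Type*) [Field F] [Fintype F] (hcard : Fintype.card F = q)
    [Field K] [Algebra F K]
    (hq : Nat.Coprime q (n1 * n2))
    (hqmem : q % (n1 * n2) ∈
      whitemanD n1 n2 g x 1 ∪ whitemanD n1 n2 g x 3 ∪ whitemanD n1 n2 g x 5)
    (β : K) (hβ : IsPrimitiveRoot β (n1 * n2)) :
    (∑ i ∈ whitemanSIdx n1 n2 g x, β ^ i) ^ (q ^ 3)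
        + (∑ i ∈ whitemanSIdx n1 n2 g x, β ^ i) + 1 = 0 ∧
    (∑ i ∈ whitemanSIdx n1 n2 g x, β ^ i) ≠ 0 ∧
    (∑ i ∈ whitemanSIdx n1 n2 g x, β ^ i) ≠ -1 := by
  classical
  -- basic numerics
  have h61 : 6 ∣ n1 - 1 := hgcd ▸ Nat.gcd_dvd_left _ _
  have h62 : 6 ∣ n2 - 1 := hgcd ▸ Nat.gcd_dvd_right _ _
  have hn1_2 : 2 ≤ n1 := hp1.two_le
  have hn2_2 : 2 ≤ n2 := hp2.two_le
  have hn1_7 : 7 ≤ n1 := by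
    rcases h61 with ⟨c, hc⟩
    rcases Nat.eq_zero_or_pos c with h | h <;> omega
  have hn2_7 : 7 ≤ n2 := by
    rcases h62 with ⟨c, hc⟩
    rcases Nat.eq_zero_or_pos c with h | h <;> omega
  have hnpos : 0 < n1 * n2 := by positivity
  have hn1lt : 1 < n1 * n2 := by nlinarith
  haveI : NeZero (n1 * n2) := ⟨by omega⟩
  haveI : NeZero n1 := ⟨by omega⟩
  haveI : NeZero n2 := ⟨by omega⟩
  haveI : Fact n1.Prime := ⟨hp1⟩
  haveI : Fact n2.Prime := ⟨hp2⟩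
  haveI : Fact (1 < n1 * n2) := ⟨hn1lt⟩
  have cop : Nat.Coprime n1 n2 := (Nat.coprime_primes hp1 hp2).mpr hne
  have h6dvd : 6 ∣ (n1 - 1) * (n2 - 1) := Dvd.dvd.mul_right h61 _
  have he6 : (n1 - 1) * (n2 - 1) / 6 * 6 = (n1 - 1) * (n2 - 1) := Nat.div_mul_cancel h6dvd
  have h36 : 36 ≤ (n1 - 1) * (n2 - 1) := by
    have a1 : 6 ≤ n1 - 1 := by omega
    have a2 : 6 ≤ n2 - 1 := by omega
    calc (36:ℕ) = 6 * 6 := by norm_num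
    _ ≤ (n1 - 1) * (n2 - 1) := Nat.mul_le_mul a1 a2
  have hepos : 0 < (n1 - 1) * (n2 - 1) / 6 := by omega
  have hege6 : 6 ≤ (n1 - 1) * (n2 - 1) / 6 := by omega
  have he1 : (n1 - 1) ∣ (n1 - 1) * (n2 - 1) / 6 := by
    obtain ⟨c, hc⟩ := h62
    refine ⟨c, ?_⟩
    have h' : (n1 - 1) * (n2 - 1) / 6 * 6 = (n1 - 1) * c * 6 := by
      rw [he6, hc]; ring
    exact Nat.eq_of_mul_eq_mul_right (by norm_num) h'
  have he2 : (n2 - 1) ∣ (n1 - 1) * (n2 - 1) / 6 := by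
    obtain ⟨c, hc⟩ := h61
    refine ⟨c, ?_⟩
    have h' : (n1 - 1) * (n2 - 1) / 6 * 6 = (n2 - 1) * c * 6 := by
      rw [he6, hc]; ring
    exact Nat.eq_of_mul_eq_mul_right (by norm_num) h'
  -- reduction homs
  have hd1 : n1 ∣ n1 * n2 := ⟨n2, rfl⟩
  have hd2 : n2 ∣ n1 * n2 := ⟨n1, mul_comm n1 n2⟩
  set φ1 : ZMod (n1 * n2) →+* ZMod n1 := ZMod.castHom hd1 (ZMod n1) with hφ1def
  set φ2 : ZMod (n1 * n2) →+* ZMod n2 := ZMod.castHom hd2 (ZMod n2) with hφ2def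
  have hφ1val : ∀ z : ZMod (n1 * n2), φ1 z = (z.val : ZMod n1) := fun z => by
    rw [hφ1def, ZMod.castHom_apply, ZMod.natCast_val]
  have hφ2val : ∀ z : ZMod (n1 * n2), φ2 z = (z.val : ZMod n2) := fun z => by
    rw [hφ2def, ZMod.castHom_apply, ZMod.natCast_val]
  have hinj : ∀ z w : ZMod (n1 * n2), φ1 z = φ1 w → φ2 z = φ2 w → z = w := by
    intro z w h1 h2
    rw [hφ1val, hφ1val, ZMod.natCast_eq_natCast_iff] at h1
    rw [hφ2val, hφ2val, ZMod.natCast_eq_natCast_iff] at h2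
    have h3 : z.val ≡ w.val [MOD n1 * n2] :=
      (Nat.modEq_and_modEq_iff_modEq_mul cop).mp ⟨h1, h2⟩
    have h4 : z.val = w.val := by
      have h5 := h3
      unfold Nat.ModEq at h5
      rwa [Nat.mod_eq_of_lt (ZMod.val_lt z), Nat.mod_eq_of_lt (ZMod.val_lt w)] at h5
    rw [← ZMod.natCast_zmod_val z, ← ZMod.natCast_zmod_val w, h4]
  -- components of g and x
  have hφ1g : φ1 ((g : ℕ) : ZMod (n1 * n2)) = (g : ZMod n1) := map_natCast φ1 g
  have hφ2g : φ2 ((g : ℕ) : ZMod (n1 * n2)) = (g : ZMod n2) := map_natCast φ2 g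
  have hx1' : ((x : ℕ) : ZMod n1) = (g : ZMod n1) := by
    rw [← ZMod.natCast_mod x n1, ← ZMod.natCast_mod g n1, hx1]
  have hx2' : ((x : ℕ) : ZMod n2) = 1 := by
    rw [← ZMod.natCast_mod x n2, hx2, ZMod.natCast_mod, Nat.cast_one]
  have hφ1x : φ1 ((x : ℕ) : ZMod (n1 * n2)) = (g : ZMod n1) := by
    rw [map_natCast]; exact hx1'
  have hφ2x : φ2 ((x : ℕ) : ZMod (n1 * n2)) = 1 := by
    rw [map_natCast]; exact hx2'
  -- units and pow-iff on components
  have hg1pow : (g : ZMod n1) ^ (n1 - 1) = 1 := by rw [← hg1]; exact pow_orderOf_eq_one _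
  have hg2pow : (g : ZMod n2) ^ (n2 - 1) = 1 := by rw [← hg2]; exact pow_orderOf_eq_one _
  have hu1 : IsUnit (g : ZMod n1) := IsUnit.of_pow_eq_one hg1pow (by omega)
  have hu2 : IsUnit (g : ZMod n2) := IsUnit.of_pow_eq_one hg2pow (by omega)
  have hU1 : ((hu1.unit : (ZMod n1)ˣ) : ZMod n1) = (g : ZMod n1) := hu1.unit_spec
  have hU2 : ((hu2.unit : (ZMod n2)ˣ) : ZMod n2) = (g : ZMod n2) := hu2.unit_spec
  have hordU1 : orderOf hu1.unit = n1 - 1 := by rw [← orderOf_units, hU1, hg1]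
  have hordU2 : orderOf hu2.unit = n2 - 1 := by rw [← orderOf_units, hU2, hg2]
  have hcoe1 : ∀ m : ℕ, ((hu1.unit ^ m : (ZMod n1)ˣ) : ZMod n1) = (g : ZMod n1) ^ m := by
    intro m; rw [Units.val_pow_eq_pow_val, hU1]
  have hcoe2 : ∀ m : ℕ, ((hu2.unit ^ m : (ZMod n2)ˣ) : ZMod n2) = (g : ZMod n2) ^ m := by
    intro m; rw [Units.val_pow_eq_pow_val, hU2]
  have hpow1 : ∀ a b : ℕ, ((g : ZMod n1) ^ a = (g : ZMod n1) ^ b) ↔ a ≡ b [MOD n1 - 1] := by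
    intro a b
    rw [← hcoe1, ← hcoe1, ← Units.ext_iff, pow_eq_pow_iff_modEq, hordU1]
  have hpow2 : ∀ a b : ℕ, ((g : ZMod n2) ^ a = (g : ZMod n2) ^ b) ↔ a ≡ b [MOD n2 - 1] := by
    intro a b
    rw [← hcoe2, ← hcoe2, ← Units.ext_iff, pow_eq_pow_iff_modEq, hordU2]
  -- the big-power of g is trivial
  have hge : ((g : ℕ) : ZMod (n1 * n2)) ^ ((n1 - 1) * (n2 - 1) / 6) = 1 := by
    apply hinj
    · rw [map_pow, hφ1g, map_one]
      have : orderOf (g : ZMod n1) ∣ (n1 - 1) * (n2 - 1) / 6 := hg1 ▸ he1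
      exact orderOf_dvd_iff_pow_eq_one.mp this
    · rw [map_pow, hφ2g, map_one]
      have : orderOf (g : ZMod n2) ∣ (n1 - 1) * (n2 - 1) / 6 := hg2 ▸ he2
      exact orderOf_dvd_iff_pow_eq_one.mp this
  have hgmod : ∀ s : ℕ, ((g : ℕ) : ZMod (n1 * n2)) ^ (s % ((n1 - 1) * (n2 - 1) / 6))
      = ((g : ℕ) : ZMod (n1 * n2)) ^ s := fun s => wh_pow_mod_of_pow_eq_one hge s
  have hginv : ∀ s : ℕ, ∃ t : ℕ,
      ((g : ℕ) : ZMod (n1 * n2)) ^ s * ((g : ℕ) : ZMod (n1 * n2)) ^ t = 1 :=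
    fun s => wh_exists_pow_mul_eq_one hge hepos s
  -- x ^ 6 is a power of g
  have hx6 : ∃ s0 : ℕ, ((x : ℕ) : ZMod (n1 * n2)) ^ 6 = ((g : ℕ) : ZMod (n1 * n2)) ^ s0 := by
    have hcong : 6 ≡ 0 [MOD Nat.gcd (n1 - 1) (n2 - 1)] := by
      rw [hgcd]; decide
    obtain ⟨s0, hs1, hs2⟩ := Nat.chineseRemainder' hcong
    refine ⟨s0, hinj _ _ ?_ ?_⟩
    · rw [map_pow, map_pow, hφ1x, hφ1g]
      exact (hpow1 6 s0).mpr hs1.symm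
    · rw [map_pow, map_pow, hφ2x, hφ2g, one_pow]
      have : (g : ZMod n2) ^ s0 = (g : ZMod n2) ^ 0 := (hpow2 s0 0).mpr hs2
      rw [this, pow_zero]
  obtain ⟨s0, hs0⟩ := hx6
  set gg : ZMod (n1 * n2) := ((g : ℕ) : ZMod (n1 * n2)) with hggdef
  set xx : ZMod (n1 * n2) := ((x : ℕ) : ZMod (n1 * n2)) with hxxdef
  clear_value gg xx
  -- membership in classes
  have memD : ∀ (i : ℕ) (z : ZMod (n1 * n2)),
      z ∈ (whitemanD n1 n2 g x i).image (Nat.cast : ℕ → ZMod (n1 * n2)) ↔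
        ∃ s : ℕ, z = gg ^ s * xx ^ i := by
    intro i z
    simp only [whitemanD, Finset.mem_image, Finset.mem_range]
    constructor
    · rintro ⟨m, ⟨s, hs, rfl⟩, rfl⟩
      refine ⟨s, ?_⟩
      rw [hggdef, hxxdef, ZMod.natCast_mod, Nat.cast_mul, Nat.cast_pow, Nat.cast_pow]
    · rintro ⟨s, rfl⟩
      refine ⟨g ^ (s % ((n1 - 1) * (n2 - 1) / 6)) * x ^ i % (n1 * n2),
        ⟨s % ((n1 - 1) * (n2 - 1) / 6), Nat.mod_lt _ hepos, rfl⟩, ?_⟩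
      rw [ZMod.natCast_mod, Nat.cast_mul, Nat.cast_pow, Nat.cast_pow, ← hggdef, ← hxxdef, hgmod]
  -- units
  have hcopg : Nat.Coprime g (n1 * n2) :=
    Nat.Coprime.mul_right ((ZMod.isUnit_iff_coprime g n1).mp hu1)
      ((ZMod.isUnit_iff_coprime g n2).mp hu2)
  have hux1 : IsUnit ((x : ℕ) : ZMod n1) := hx1' ▸ hu1
  have hux2 : IsUnit ((x : ℕ) : ZMod n2) := hx2' ▸ isUnit_one
  have hcopx : Nat.Coprime x (n1 * n2) :=
    Nat.Coprime.mul_right ((ZMod.isUnit_iff_coprime x n1).mp hux1)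
      ((ZMod.isUnit_iff_coprime x n2).mp hux2)
  have hugg : IsUnit gg := hggdef ▸ (ZMod.isUnit_iff_coprime g (n1 * n2)).mpr hcopg
  have huxx : IsUnit xx := hxxdef ▸ (ZMod.isUnit_iff_coprime x (n1 * n2)).mpr hcopx
  have hPunit : ∀ (i : ℕ) (z : ZMod (n1 * n2)), (∃ s : ℕ, z = gg ^ s * xx ^ i) → IsUnit z := by
    rintro i z ⟨s, rfl⟩
    exact (hugg.pow s).mul (huxx.pow i)
  -- two representations force congruent indices mod 6
  have hPmod : ∀ (i j : ℕ) (z : ZMod (n1 * n2)), (∃ s : ℕ, z = gg ^ s * xx ^ i) →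
      (∃ t : ℕ, z = gg ^ t * xx ^ j) → i ≡ j [MOD 6] := by
    rintro i j z ⟨s, rfl⟩ ⟨t, ht⟩
    have h1 := congrArg φ1 ht
    have h2 := congrArg φ2 ht
    simp only [map_mul, map_pow, hφ1g, hφ1x] at h1
    simp only [map_mul, map_pow, hφ2g, hφ2x] at h2
    rw [← pow_add, ← pow_add] at h1
    rw [one_pow, one_pow, mul_one, mul_one] at h2
    have m1 : s + i ≡ t + j [MOD n1 - 1] := (hpow1 _ _).mp h1
    have m2 : s ≡ t [MOD n2 - 1] := (hpow2 _ _).mp h2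
    exact (m2.of_dvd h62).add_left_cancel (m1.of_dvd h61)
  have hPne : ∀ (i j : ℕ) (z : ZMod (n1 * n2)), i < 6 → j < 6 →
      (∃ s : ℕ, z = gg ^ s * xx ^ i) → (∃ t : ℕ, z = gg ^ t * xx ^ j) → i = j := by
    intro i j z hi hj h1 h2
    have := hPmod i j z h1 h2
    unfold Nat.ModEq at this
    omega
  -- shifting the index by 6
  have hPshift : ∀ (i : ℕ) (z : ZMod (n1 * n2)),
      (∃ s : ℕ, z = gg ^ s * xx ^ (i + 6)) ↔ (∃ s : ℕ, z = gg ^ s * xx ^ i) := by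
    intro i z
    constructor
    · rintro ⟨s, rfl⟩
      refine ⟨s + s0, ?_⟩
      rw [pow_add xx i 6, hs0, pow_add gg s s0]
      ring
    · rintro ⟨s, rfl⟩
      obtain ⟨t, ht⟩ := hginv s0
      refine ⟨s + t, ?_⟩
      rw [pow_add xx i 6, hs0]
      have h' : gg ^ (s + t) * (xx ^ i * gg ^ s0) = (gg ^ s0 * gg ^ t) * (gg ^ s * xx ^ i) := by
        rw [pow_add]; ring
      rw [h', ht, one_mul]
  -- q^3 lies in class 3
  set Qz : ZMod (n1 * n2) := ((q : ℕ) : ZMod (n1 * n2)) ^ 3 with hQzdef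
  clear_value Qz
  have hq3 : ∃ a : ℕ, Qz = gg ^ a * xx ^ 3 := by
    have hqc : (((q % (n1 * n2)) : ℕ) : ZMod (n1 * n2)) = ((q : ℕ) : ZMod (n1 * n2)) :=
      ZMod.natCast_mod q (n1 * n2)
    have hmem : ∀ j : ℕ, q % (n1 * n2) ∈ whitemanD n1 n2 g x j →
        ∃ s : ℕ, ((q : ℕ) : ZMod (n1 * n2)) = gg ^ s * xx ^ j := by
      intro j hj
      have h' := (memD j _).mp (Finset.mem_image_of_mem _ hj)
      rwa [hqc] at h'
    rcases Finset.mem_union.mp hqmem with h13 | h5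
    · rcases Finset.mem_union.mp h13 with h1 | h3
      · obtain ⟨s, hs⟩ := hmem 1 h1
        refine ⟨s * 3, ?_⟩
        rw [hQzdef, hs]
        ring
      · obtain ⟨s, hs⟩ := hmem 3 h3
        refine ⟨s * 3 + s0, ?_⟩
        rw [hQzdef, hs]
        have h' : (gg ^ s * xx ^ 3) ^ 3 = gg ^ (s * 3) * xx ^ 3 * xx ^ 6 := by ring
        rw [h', hs0, pow_add]
        ring
    · obtain ⟨s, hs⟩ := hmem 5 h5
      refine ⟨s * 3 + s0 * 2, ?_⟩
      rw [hQzdef, hs]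
      have h' : (gg ^ s * xx ^ 5) ^ 3 = gg ^ (s * 3) * xx ^ 3 * (xx ^ 6) ^ 2 := by ring
      rw [h', hs0, pow_add]
      ring
  obtain ⟨a, hQa⟩ := hq3
  obtain ⟨binv, hbinv⟩ := hginv (a + s0)
  set Rz : ZMod (n1 * n2) := gg ^ binv * xx ^ 3 with hRzdef
  clear_value Rz
  have hQR : Qz * Rz = 1 := by
    rw [hQa, hRzdef]
    calc gg ^ a * xx ^ 3 * (gg ^ binv * xx ^ 3) = gg ^ a * gg ^ binv * xx ^ 6 := by ring
    _ = gg ^ a * gg ^ binv * gg ^ s0 := by rw [hs0]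
    _ = gg ^ (a + s0) * gg ^ binv := by rw [pow_add]; ring
    _ = 1 := hbinv
  have hRQ : Rz * Qz = 1 := by
    calc Rz * Qz = Qz * Rz := mul_comm _ _
    _ = 1 := hQR
  have hQunit : IsUnit Qz := IsUnit.of_mul_eq_one _ hQR
  have hRunit : IsUnit Rz := IsUnit.of_mul_eq_one _ hRQ
  have hQinj : ∀ z w : ZMod (n1 * n2), Qz * z = Qz * w → z = w := by
    intro z w h
    calc z = Rz * Qz * z := by rw [hRQ, one_mul]
    _ = Rz * (Qz * w) := by rw [mul_assoc, h]
    _ = Rz * Qz * w := by rw [← mul_assoc]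
    _ = w := by rw [hRQ, one_mul]
  -- multiplication by Qz maps D_i to D_{i+3}
  have hQD : ∀ i : ℕ,
      ((whitemanD n1 n2 g x i).image (Nat.cast : ℕ → ZMod (n1 * n2))).image (fun z => Qz * z) =
        (whitemanD n1 n2 g x (i + 3)).image (Nat.cast : ℕ → ZMod (n1 * n2)) := by
    intro i
    ext z
    rw [Finset.mem_image]
    constructor
    · rintro ⟨w, hw, rfl⟩
      rw [memD] at hw ⊢
      obtain ⟨s, rfl⟩ := hw
      refine ⟨a + s, ?_⟩
      rw [hQa, pow_add gg a s]
      ring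
    · intro hz
      rw [memD] at hz
      obtain ⟨t, rfl⟩ := hz
      refine ⟨Rz * (gg ^ t * xx ^ (i + 3)), ?_, by rw [← mul_assoc, hQR, one_mul]⟩
      rw [memD]
      apply (hPshift i _).mp
      refine ⟨binv + t, ?_⟩
      rw [hRzdef, pow_add gg binv t]
      ring
  -- the multiple-sets inside ZMod
  have memN : ∀ z : ZMod (n1 * n2),
      z ∈ (multSet n1 n2).image (Nat.cast : ℕ → ZMod (n1 * n2)) ↔ (z ≠ 0 ∧ n1 ∣ z.val) := by
    intro z
    simp only [multSet, Finset.mem_image, Finset.mem_Icc]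
    constructor
    · rintro ⟨m, ⟨k, ⟨hk1, hk2⟩, rfl⟩, rfl⟩
      have hlt : k * n1 < n1 * n2 := by
        calc k * n1 < n2 * n1 := (Nat.mul_lt_mul_right (by omega)).mpr (by omega)
        _ = n1 * n2 := mul_comm _ _
      have hval : ((k * n1 : ℕ) : ZMod (n1 * n2)).val = k * n1 := ZMod.val_cast_of_lt hlt
      constructor
      · intro h0
        rw [h0, ZMod.val_zero] at hval
        have : 0 < k * n1 := Nat.mul_pos (by omega) (by omega)
        omega
      · rw [hval]; exact dvd_mul_left n1 k
    · rintro ⟨h0, k, hk⟩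
      refine ⟨z.val, ⟨k, ⟨?_, ?_⟩, ?_⟩, ZMod.natCast_zmod_val z⟩
      · rcases Nat.eq_zero_or_pos k with rfl | h
        · rw [mul_zero] at hk
          exact absurd ((ZMod.val_eq_zero z).mp hk) h0
        · exact h
      · have hlt := ZMod.val_lt z
        rw [hk] at hlt
        have : k < n2 := lt_of_mul_lt_mul_left hlt (by omega)
        omega
      · rw [hk, mul_comm]
  have memM : ∀ z : ZMod (n1 * n2),
      z ∈ (multSet n2 n1).image (Nat.cast : ℕ → ZMod (n1 * n2)) ↔ (z ≠ 0 ∧ n2 ∣ z.val) := by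
    intro z
    simp only [multSet, Finset.mem_image, Finset.mem_Icc]
    constructor
    · rintro ⟨m, ⟨k, ⟨hk1, hk2⟩, rfl⟩, rfl⟩
      have hlt : k * n2 < n1 * n2 := (Nat.mul_lt_mul_right (by omega)).mpr (by omega)
      have hval : ((k * n2 : ℕ) : ZMod (n1 * n2)).val = k * n2 := ZMod.val_cast_of_lt hlt
      constructor
      · intro h0
        rw [h0, ZMod.val_zero] at hval
        have : 0 < k * n2 := Nat.mul_pos (by omega) (by omega)
        omega
      · rw [hval]; exact dvd_mul_left n2 k
    · rintro ⟨h0, k, hk⟩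
      refine ⟨z.val, ⟨k, ⟨?_, ?_⟩, ?_⟩, ZMod.natCast_zmod_val z⟩
      · rcases Nat.eq_zero_or_pos k with rfl | h
        · rw [mul_zero] at hk
          exact absurd ((ZMod.val_eq_zero z).mp hk) h0
        · exact h
      · have hlt := ZMod.val_lt z
        rw [hk, mul_comm n1 n2] at hlt
        have : k < n1 := lt_of_mul_lt_mul_left hlt (by omega)
        omega
      · rw [hk, mul_comm]
  have hNstable : ∀ u : ZMod (n1 * n2), IsUnit u →
      ∀ z ∈ (multSet n1 n2).image (Nat.cast : ℕ → ZMod (n1 * n2)),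
        u * z ∈ (multSet n1 n2).image (Nat.cast : ℕ → ZMod (n1 * n2)) := by
    intro u hu z hz
    rw [memN] at hz ⊢
    obtain ⟨h0, hdvd⟩ := hz
    obtain ⟨v, hv⟩ := hu.exists_left_inv
    constructor
    · intro h
      apply h0
      calc z = v * (u * z) := by rw [← mul_assoc, hv, one_mul]
      _ = 0 := by rw [h, mul_zero]
    · rw [ZMod.val_mul]
      have h1 : n1 ∣ u.val * z.val := hdvd.mul_left _
      refine Nat.dvd_of_mod_eq_zero ?_
      rw [Nat.mod_mod_of_dvd _ hd1]
      obtain ⟨c, hc⟩ := h1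
      rw [hc]
      exact Nat.mul_mod_right n1 c
  have hQN : ((multSet n1 n2).image (Nat.cast : ℕ → ZMod (n1 * n2))).image (fun z => Qz * z) =
      (multSet n1 n2).image (Nat.cast : ℕ → ZMod (n1 * n2)) := by
    apply Finset.Subset.antisymm
    · intro z hz
      rw [Finset.mem_image] at hz
      obtain ⟨w, hw, rfl⟩ := hz
      exact hNstable Qz hQunit w hw
    · intro z hz
      rw [Finset.mem_image]
      exact ⟨Rz * z, hNstable Rz hRunit z hz, by rw [← mul_assoc, hQR, one_mul]⟩
  -- transfer of sums to ZMod
  have hβn : β ^ (n1 * n2) = 1 := hβ.pow_eq_one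
  have hfc : ∀ m : ℕ, β ^ m = β ^ ((m : ZMod (n1 * n2)).val) := by
    intro m
    rw [ZMod.val_natCast]
    conv_lhs => rw [← Nat.mod_add_div m (n1 * n2)]
    rw [pow_add, pow_mul, hβn, one_pow, mul_one]
  have hsum : ∀ A : Finset ℕ, (∀ m ∈ A, m < n1 * n2) →
      ∑ i ∈ A, β ^ i = ∑ z ∈ A.image (Nat.cast : ℕ → ZMod (n1 * n2)), β ^ z.val := by
    intro A hA
    rw [Finset.sum_image (fun m hm k hk h => by
      have h' := congrArg ZMod.val h
      rwa [ZMod.val_cast_of_lt (hA m hm), ZMod.val_cast_of_lt (hA k hk)] at h')]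
    exact Finset.sum_congr rfl fun m _ => hfc m
  have hDlt : ∀ (i : ℕ), ∀ m ∈ whitemanD n1 n2 g x i, m < n1 * n2 := by
    intro i m hm
    simp only [whitemanD, Finset.mem_image, Finset.mem_range] at hm
    obtain ⟨s, -, rfl⟩ := hm
    exact Nat.mod_lt _ hnpos
  have hN1lt : ∀ m ∈ multSet n1 n2, m < n1 * n2 := by
    intro m hm
    simp only [multSet, Finset.mem_image, Finset.mem_Icc] at hm
    obtain ⟨k, ⟨hk1, hk2⟩, rfl⟩ := hm
    calc k * n1 < n2 * n1 := (Nat.mul_lt_mul_right (by omega)).mpr (by omega)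
    _ = n1 * n2 := mul_comm _ _
  have hN2lt : ∀ m ∈ multSet n2 n1, m < n1 * n2 := by
    intro m hm
    simp only [multSet, Finset.mem_image, Finset.mem_Icc] at hm
    obtain ⟨k, ⟨hk1, hk2⟩, rfl⟩ := hm
    exact (Nat.mul_lt_mul_right (by omega)).mpr (by omega)
  -- geometric sums
  have hNsum : ∑ z ∈ (multSet n1 n2).image (Nat.cast : ℕ → ZMod (n1 * n2)), β ^ z.val = -1 := by
    rw [← hsum _ hN1lt]
    have hprim : IsPrimitiveRoot (β ^ n1) n2 := hβ.pow hnpos rfl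
    have hinj' : ∀ k ∈ Finset.Icc 1 (n2 - 1), ∀ l ∈ Finset.Icc 1 (n2 - 1),
        k * n1 = l * n1 → k = l := by
      intro k _ l _ h
      exact Nat.eq_of_mul_eq_mul_right (by omega) h
    rw [multSet, Finset.sum_image hinj']
    have hrange : Finset.range n2 = insert 0 (Finset.Icc 1 (n2 - 1)) := by
      ext m
      simp only [Finset.mem_range, Finset.mem_insert, Finset.mem_Icc]
      omega
    have hgeo := hprim.geom_sum_eq_zero (show 1 < n2 by omega)
    rw [hrange, Finset.sum_insert (by simp)] at hgeo
    have hch : ∑ k ∈ Finset.Icc 1 (n2 - 1), β ^ (k * n1)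
        = ∑ k ∈ Finset.Icc 1 (n2 - 1), (β ^ n1) ^ k := by
      refine Finset.sum_congr rfl fun k _ => ?_
      rw [← pow_mul, mul_comm]
    rw [hch]
    rw [pow_zero] at hgeo
    linear_combination hgeo
  have hMsum : ∑ z ∈ (multSet n2 n1).image (Nat.cast : ℕ → ZMod (n1 * n2)), β ^ z.val = -1 := by
    rw [← hsum _ hN2lt]
    have hprim : IsPrimitiveRoot (β ^ n2) n1 := hβ.pow hnpos (mul_comm n1 n2)
    have hinj' : ∀ k ∈ Finset.Icc 1 (n1 - 1), ∀ l ∈ Finset.Icc 1 (n1 - 1),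
        k * n2 = l * n2 → k = l := by
      intro k _ l _ h
      exact Nat.eq_of_mul_eq_mul_right (by omega) h
    rw [multSet, Finset.sum_image hinj']
    have hrange : Finset.range n1 = insert 0 (Finset.Icc 1 (n1 - 1)) := by
      ext m
      simp only [Finset.mem_range, Finset.mem_insert, Finset.mem_Icc]
      omega
    have hgeo := hprim.geom_sum_eq_zero (show 1 < n1 by omega)
    rw [hrange, Finset.sum_insert (by simp)] at hgeo
    have hch : ∑ k ∈ Finset.Icc 1 (n1 - 1), β ^ (k * n2)
        = ∑ k ∈ Finset.Icc 1 (n1 - 1), (β ^ n2) ^ k := by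
      refine Finset.sum_congr rfl fun k _ => ?_
      rw [← pow_mul, mul_comm]
    rw [hch]
    rw [pow_zero] at hgeo
    linear_combination hgeo
  have hUniv : ∑ z ∈ (Finset.univ : Finset (ZMod (n1 * n2))), β ^ z.val = 0 := by
    have himg : (Finset.range (n1 * n2)).image (Nat.cast : ℕ → ZMod (n1 * n2)) = Finset.univ := by
      apply Finset.eq_univ_of_forall
      intro z
      rw [Finset.mem_image]
      exact ⟨z.val, Finset.mem_range.mpr (ZMod.val_lt z), ZMod.natCast_zmod_val z⟩
    have h0 := hβ.geom_sum_eq_zero hn1lt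
    rw [hsum _ (fun m hm => Finset.mem_range.mp hm), himg] at h0
    exact h0
  -- divisibility characterizations
  have hzero_iff : ∀ z : ZMod (n1 * n2), z = 0 ↔ (n1 ∣ z.val ∧ n2 ∣ z.val) := by
    intro z
    constructor
    · rintro rfl
      rw [ZMod.val_zero]
      exact ⟨dvd_zero _, dvd_zero _⟩
    · rintro ⟨h1, h2⟩
      have hdvd : n1 * n2 ∣ z.val := Nat.Coprime.mul_dvd_of_dvd_of_dvd cop h1 h2
      have hv : z.val = 0 := by
        rcases Nat.eq_zero_or_pos z.val with h | h
        · exact h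
        · exact absurd (Nat.le_of_dvd h hdvd) (not_le.mpr (ZMod.val_lt z))
      exact (ZMod.val_eq_zero z).mp hv
  have hunit_iff : ∀ z : ZMod (n1 * n2), IsUnit z ↔ (¬ n1 ∣ z.val ∧ ¬ n2 ∣ z.val) := by
    intro z
    have h0 : IsUnit z ↔ Nat.Coprime z.val (n1 * n2) := by
      conv_lhs => rw [← ZMod.natCast_zmod_val z]
      exact ZMod.isUnit_iff_coprime z.val (n1 * n2)
    rw [h0, Nat.coprime_mul_iff_right]
    rw [show Nat.Coprime z.val n1 ↔ ¬ n1 ∣ z.val from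
      Nat.coprime_comm.trans (Nat.Prime.coprime_iff_not_dvd hp1)]
    rw [show Nat.Coprime z.val n2 ↔ ¬ n2 ∣ z.val from
      Nat.coprime_comm.trans (Nat.Prime.coprime_iff_not_dvd hp2)]
  -- every unit is gg^s * xx^i with i < 6
  have hsurj : ∀ z : ZMod (n1 * n2), IsUnit z → ∃ i : ℕ, i < 6 ∧ ∃ s : ℕ, z = gg ^ s * xx ^ i := by
    intro z hz
    have hz1 : IsUnit (φ1 z) := hz.map φ1
    have hz2 : IsUnit (φ2 z) := hz.map φ2
    have hcard1 : Fintype.card (ZMod n1)ˣ = n1 - 1 := by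
      rw [ZMod.card_units_eq_totient, Nat.totient_prime hp1]
    have hcard2 : Fintype.card (ZMod n2)ˣ = n2 - 1 := by
      rw [ZMod.card_units_eq_totient, Nat.totient_prime hp2]
    obtain ⟨u, hu⟩ := wh_exists_pow_eq_of_orderOf_eq_card hu1.unit
      (by rw [hordU1, hcard1]) hz1.unit
    obtain ⟨v, hv⟩ := wh_exists_pow_eq_of_orderOf_eq_card hu2.unit
      (by rw [hordU2, hcard2]) hz2.unit
    have hzu : φ1 z = (g : ZMod n1) ^ u := by
      rw [← hz1.unit_spec, ← hu, Units.val_pow_eq_pow_val, hU1]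
    have hzv : φ2 z = (g : ZMod n2) ^ v := by
      rw [← hz2.unit_spec, ← hv, Units.val_pow_eq_pow_val, hU2]
    have hi6 : (u + 5 * v) % 6 < 6 := Nat.mod_lt _ (by norm_num)
    have hcong : u ≡ v + (u + 5 * v) % 6 [MOD Nat.gcd (n1 - 1) (n2 - 1)] := by
      rw [hgcd]
      show u % 6 = (v + (u + 5 * v) % 6) % 6
      omega
    obtain ⟨s', hsA, hsB⟩ := Nat.chineseRemainder' hcong
    refine ⟨(u + 5 * v) % 6, hi6, s' + (n1 - 1) * (n2 - 1) / 6 - (u + 5 * v) % 6, ?_⟩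
    have hsi : s' + (n1 - 1) * (n2 - 1) / 6 - (u + 5 * v) % 6 + (u + 5 * v) % 6
        = s' + (n1 - 1) * (n2 - 1) / 6 := by omega
    apply hinj
    · rw [map_mul, map_pow, map_pow, hφ1g, hφ1x, ← pow_add, hzu, hsi]
      refine ((hpow1 u _).mpr ?_)
      have h1 : s' + (n1 - 1) * (n2 - 1) / 6 ≡ u + 0 [MOD n1 - 1] :=
        Nat.ModEq.add hsA (Nat.modEq_zero_iff_dvd.mpr he1)
      rw [Nat.add_zero] at h1
      exact h1.symm
    · rw [map_mul, map_pow, map_pow, hφ2g, hφ2x, one_pow, mul_one, hzv]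
      refine ((hpow2 v _).mpr ?_)
      have h1 : s' + (n1 - 1) * (n2 - 1) / 6 ≡ (v + (u + 5 * v) % 6) + 0 [MOD n2 - 1] :=
        Nat.ModEq.add hsB (Nat.modEq_zero_iff_dvd.mpr he2)
      rw [Nat.add_zero] at h1
      rw [← hsi] at h1
      exact (Nat.ModEq.add_right_cancel' _ h1).symm
  -- units of the classes
  have hDsub : ∀ i : ℕ, ∀ z ∈ (whitemanD n1 n2 g x i).image (Nat.cast : ℕ → ZMod (n1 * n2)),
      IsUnit z := fun i z hz => hPunit i z ((memD i z).mp hz)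
  -- disjointness of the two triple unions
  have hdisjU : Disjoint (((whitemanD n1 n2 g x 0).image (Nat.cast : ℕ → ZMod (n1 * n2))) ∪ ((whitemanD n1 n2 g x 1).image (Nat.cast : ℕ → ZMod (n1 * n2))) ∪ ((whitemanD n1 n2 g x 2).image (Nat.cast : ℕ → ZMod (n1 * n2)))) (((whitemanD n1 n2 g x 3).image (Nat.cast : ℕ → ZMod (n1 * n2))) ∪ ((whitemanD n1 n2 g x 4).image (Nat.cast : ℕ → ZMod (n1 * n2))) ∪ ((whitemanD n1 n2 g x 5).image (Nat.cast : ℕ → ZMod (n1 * n2)))) := by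
    rw [Finset.disjoint_left]
    intro z h0 h3
    simp only [Finset.mem_union] at h0 h3
    rcases h0 with (ha | ha) | ha <;> rcases h3 with (hb | hb) | hb <;>
      exact absurd (hPmod _ _ _ ((memD _ _).mp ha) ((memD _ _).mp hb)) (by decide)
  -- the union of the six classes is the complement of 0, N, M
  have hUU : (((whitemanD n1 n2 g x 0).image (Nat.cast : ℕ → ZMod (n1 * n2))) ∪ ((whitemanD n1 n2 g x 1).image (Nat.cast : ℕ → ZMod (n1 * n2))) ∪ ((whitemanD n1 n2 g x 2).image (Nat.cast : ℕ → ZMod (n1 * n2)))) ∪ (((whitemanD n1 n2 g x 3).image (Nat.cast : ℕ → ZMod (n1 * n2))) ∪ ((whitemanD n1 n2 g x 4).image (Nat.cast : ℕ → ZMod (n1 * n2))) ∪ ((whitemanD n1 n2 g x 5).image (Nat.cast : ℕ → ZMod (n1 * n2))))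
      = Finset.univ \ (({(0 : ZMod (n1 * n2))} : Finset (ZMod (n1 * n2))) ∪ ((multSet n1 n2).image (Nat.cast : ℕ → ZMod (n1 * n2))) ∪ ((multSet n2 n1).image (Nat.cast : ℕ → ZMod (n1 * n2)))) := by
    ext z
    simp only [Finset.mem_union, Finset.mem_sdiff, Finset.mem_univ, true_and,
      Finset.mem_singleton]
    constructor
    · intro h
      have hz : IsUnit z := by
        rcases h with ((ha | ha) | ha) | ((ha | ha) | ha) <;> exact hDsub _ _ ha
      obtain ⟨hnd1, hnd2⟩ := (hunit_iff z).mp hz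
      rintro ((rfl | hN) | hM)
      · exact hnd1 (by simp [ZMod.val_zero])
      · exact hnd1 ((memN z).mp hN).2
      · exact hnd2 ((memM z).mp hM).2
    · intro hc
      push_neg at hc
      obtain ⟨⟨h0, hN⟩, hM⟩ := hc
      have hz : IsUnit z := by
        refine (hunit_iff z).mpr ⟨?_, ?_⟩
        · intro hdvd
          exact hN ((memN z).mpr ⟨h0, hdvd⟩)
        · intro hdvd
          exact hM ((memM z).mpr ⟨h0, hdvd⟩)
      obtain ⟨i, hi, hPz⟩ := hsurj z hz
      interval_cases i
      · exact Or.inl (Or.inl (Or.inl ((memD 0 z).mpr hPz)))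
      · exact Or.inl (Or.inl (Or.inr ((memD 1 z).mpr hPz)))
      · exact Or.inl (Or.inr ((memD 2 z).mpr hPz))
      · exact Or.inr (Or.inl (Or.inl ((memD 3 z).mpr hPz)))
      · exact Or.inr (Or.inl (Or.inr ((memD 4 z).mpr hPz)))
      · exact Or.inr (Or.inr ((memD 5 z).mpr hPz))
  -- disjointness for sum splits
  have hdisjNV : ∀ V : Finset (ZMod (n1 * n2)), (∀ z ∈ V, IsUnit z) → Disjoint ((multSet n1 n2).image (Nat.cast : ℕ → ZMod (n1 * n2))) V := by
    intro V hV
    rw [Finset.disjoint_left]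
    intro z hz hzV
    obtain ⟨h0, hdvd⟩ := (memN z).mp hz
    exact ((hunit_iff z).mp (hV z hzV)).1 hdvd
  have hU012unit : ∀ z ∈ (((whitemanD n1 n2 g x 0).image (Nat.cast : ℕ → ZMod (n1 * n2))) ∪ ((whitemanD n1 n2 g x 1).image (Nat.cast : ℕ → ZMod (n1 * n2))) ∪ ((whitemanD n1 n2 g x 2).image (Nat.cast : ℕ → ZMod (n1 * n2)))), IsUnit z := by
    intro z hz
    simp only [Finset.mem_union] at hz
    rcases hz with (ha | ha) | ha <;> exact hDsub _ _ ha
  have hU345unit : ∀ z ∈ (((whitemanD n1 n2 g x 3).image (Nat.cast : ℕ → ZMod (n1 * n2))) ∪ ((whitemanD n1 n2 g x 4).image (Nat.cast : ℕ → ZMod (n1 * n2))) ∪ ((whitemanD n1 n2 g x 5).image (Nat.cast : ℕ → ZMod (n1 * n2)))), IsUnit z := by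
    intro z hz
    simp only [Finset.mem_union] at hz
    rcases hz with (ha | ha) | ha <;> exact hDsub _ _ ha
  -- sum over units
  have hUsum : ∑ z ∈ ((((whitemanD n1 n2 g x 0).image (Nat.cast : ℕ → ZMod (n1 * n2))) ∪ ((whitemanD n1 n2 g x 1).image (Nat.cast : ℕ → ZMod (n1 * n2))) ∪ ((whitemanD n1 n2 g x 2).image (Nat.cast : ℕ → ZMod (n1 * n2)))) ∪ (((whitemanD n1 n2 g x 3).image (Nat.cast : ℕ → ZMod (n1 * n2))) ∪ ((whitemanD n1 n2 g x 4).image (Nat.cast : ℕ → ZMod (n1 * n2))) ∪ ((whitemanD n1 n2 g x 5).image (Nat.cast : ℕ → ZMod (n1 * n2))))), β ^ z.val = 1 := by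
    rw [hUU]
    rw [Finset.sum_sdiff_eq_sub (Finset.subset_univ _)]
    have hdA : Disjoint ({(0 : ZMod (n1 * n2))} : Finset (ZMod (n1 * n2))) ((multSet n1 n2).image (Nat.cast : ℕ → ZMod (n1 * n2))) := by
      rw [Finset.disjoint_left]
      intro z hz hzN
      rw [Finset.mem_singleton] at hz
      exact ((memN z).mp hzN).1 hz
    have hdB : Disjoint (({(0 : ZMod (n1 * n2))} : Finset (ZMod (n1 * n2))) ∪ ((multSet n1 n2).image (Nat.cast : ℕ → ZMod (n1 * n2)))) ((multSet n2 n1).image (Nat.cast : ℕ → ZMod (n1 * n2))) := by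
      rw [Finset.disjoint_left]
      intro z hz hzM
      obtain ⟨h0, hdvd⟩ := (memM z).mp hzM
      rcases Finset.mem_union.mp hz with h | h
      · exact h0 (Finset.mem_singleton.mp h)
      · exact h0 ((hzero_iff z).mpr ⟨((memN z).mp h).2, hdvd⟩)
    rw [Finset.sum_union hdB, Finset.sum_union hdA, Finset.sum_singleton, hUniv, hNsum, hMsum,
      ZMod.val_zero, pow_zero]
    ring
  -- bounds for the S index set
  have hSlt : ∀ m ∈ whitemanSIdx n1 n2 g x, m < n1 * n2 := by
    intro m hm
    rcases Finset.mem_union.mp hm with hA | h2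
    · rcases Finset.mem_union.mp hA with hB | h1
      · rcases Finset.mem_union.mp hB with hC | h0
        · exact hN1lt m hC
        · exact hDlt 0 m h0
      · exact hDlt 1 m h1
    · exact hDlt 2 m h2
  have hS1 : ∑ i ∈ whitemanSIdx n1 n2 g x, β ^ i
      = ∑ z ∈ (((multSet n1 n2).image (Nat.cast : ℕ → ZMod (n1 * n2))) ∪ ((whitemanD n1 n2 g x 0).image (Nat.cast : ℕ → ZMod (n1 * n2))) ∪ ((whitemanD n1 n2 g x 1).image (Nat.cast : ℕ → ZMod (n1 * n2))) ∪ ((whitemanD n1 n2 g x 2).image (Nat.cast : ℕ → ZMod (n1 * n2)))), β ^ z.val := by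
    rw [hsum _ hSlt]
    congr 1
    simp only [whitemanSIdx, Finset.image_union]
  -- Frobenius
  have hqpos : 0 < q := hcard ▸ Fintype.card_pos
  have hfrob : ∀ T : Finset (ZMod (n1 * n2)),
      (∑ z ∈ T, β ^ z.val) ^ q ^ 3 = ∑ z ∈ T, (β ^ z.val) ^ q ^ 3 := by
    intro T
    haveI : CharP F (ringChar F) := ringChar.charP F
    obtain ⟨k, hpp, hqpk⟩ := FiniteField.card F (ringChar F)
    haveI : Fact (Nat.Prime (ringChar F)) := ⟨hpp⟩
    haveI : CharP K (ringChar F) := charP_of_injective_algebraMap (algebraMap F K).injective _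
    have hq3 : q ^ 3 = ringChar F ^ ((k : ℕ) * 3) := by
      rw [← hcard, hqpk, ← pow_mul]
    rw [hq3]
    exact sum_pow_char_pow _ _ T _
  have hq3pow : ∀ z : ZMod (n1 * n2), (β ^ z.val) ^ q ^ 3 = β ^ (Qz * z).val := by
    intro z
    have h1 : ((q ^ 3 * z.val : ℕ) : ZMod (n1 * n2)) = Qz * z := by
      rw [Nat.cast_mul, Nat.cast_pow, ZMod.natCast_zmod_val, hQzdef]
    rw [← h1, ← hfc, ← pow_mul, Nat.mul_comm]
  have hSfro : (∑ i ∈ whitemanSIdx n1 n2 g x, β ^ i) ^ q ^ 3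
      = ∑ z ∈ (((multSet n1 n2).image (Nat.cast : ℕ → ZMod (n1 * n2))) ∪ ((whitemanD n1 n2 g x 3).image (Nat.cast : ℕ → ZMod (n1 * n2))) ∪ ((whitemanD n1 n2 g x 4).image (Nat.cast : ℕ → ZMod (n1 * n2))) ∪ ((whitemanD n1 n2 g x 5).image (Nat.cast : ℕ → ZMod (n1 * n2)))), β ^ z.val := by
    rw [hS1, hfrob]
    have h2 : ∑ z ∈ (((multSet n1 n2).image (Nat.cast : ℕ → ZMod (n1 * n2))) ∪ ((whitemanD n1 n2 g x 0).image (Nat.cast : ℕ → ZMod (n1 * n2))) ∪ ((whitemanD n1 n2 g x 1).image (Nat.cast : ℕ → ZMod (n1 * n2))) ∪ ((whitemanD n1 n2 g x 2).image (Nat.cast : ℕ → ZMod (n1 * n2)))), (β ^ z.val) ^ q ^ 3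
        = ∑ z ∈ (((multSet n1 n2).image (Nat.cast : ℕ → ZMod (n1 * n2))) ∪ ((whitemanD n1 n2 g x 0).image (Nat.cast : ℕ → ZMod (n1 * n2))) ∪ ((whitemanD n1 n2 g x 1).image (Nat.cast : ℕ → ZMod (n1 * n2))) ∪ ((whitemanD n1 n2 g x 2).image (Nat.cast : ℕ → ZMod (n1 * n2)))), β ^ ((Qz * z).val) :=
      Finset.sum_congr rfl fun z _ => hq3pow z
    rw [h2, ← Finset.sum_image (f := fun w : ZMod (n1 * n2) => β ^ w.val)
      (g := fun z => Qz * z) (fun z _ w _ h => hQinj z w h)]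
    congr 1
    rw [Finset.image_union, Finset.image_union, Finset.image_union, hQN, hQD 0, hQD 1, hQD 2]
  -- assembling the key identity
  have hre012 : (((multSet n1 n2).image (Nat.cast : ℕ → ZMod (n1 * n2))) ∪ ((whitemanD n1 n2 g x 0).image (Nat.cast : ℕ → ZMod (n1 * n2))) ∪ ((whitemanD n1 n2 g x 1).image (Nat.cast : ℕ → ZMod (n1 * n2))) ∪ ((whitemanD n1 n2 g x 2).image (Nat.cast : ℕ → ZMod (n1 * n2))))
      = ((multSet n1 n2).image (Nat.cast : ℕ → ZMod (n1 * n2))) ∪ ((((whitemanD n1 n2 g x 0).image (Nat.cast : ℕ → ZMod (n1 * n2))) ∪ ((whitemanD n1 n2 g x 1).image (Nat.cast : ℕ → ZMod (n1 * n2)))) ∪ ((whitemanD n1 n2 g x 2).image (Nat.cast : ℕ → ZMod (n1 * n2)))) := by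
    simp only [Finset.union_assoc]
  have hre345 : (((multSet n1 n2).image (Nat.cast : ℕ → ZMod (n1 * n2))) ∪ ((whitemanD n1 n2 g x 3).image (Nat.cast : ℕ → ZMod (n1 * n2))) ∪ ((whitemanD n1 n2 g x 4).image (Nat.cast : ℕ → ZMod (n1 * n2))) ∪ ((whitemanD n1 n2 g x 5).image (Nat.cast : ℕ → ZMod (n1 * n2))))
      = ((multSet n1 n2).image (Nat.cast : ℕ → ZMod (n1 * n2))) ∪ ((((whitemanD n1 n2 g x 3).image (Nat.cast : ℕ → ZMod (n1 * n2))) ∪ ((whitemanD n1 n2 g x 4).image (Nat.cast : ℕ → ZMod (n1 * n2)))) ∪ ((whitemanD n1 n2 g x 5).image (Nat.cast : ℕ → ZMod (n1 * n2)))) := by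
    simp only [Finset.union_assoc]
  have hkey : (∑ i ∈ whitemanSIdx n1 n2 g x, β ^ i) ^ q ^ 3
      + (∑ i ∈ whitemanSIdx n1 n2 g x, β ^ i) = -1 := by
    rw [hSfro, hS1, hre012, hre345]
    rw [Finset.sum_union (hdisjNV _ hU345unit), Finset.sum_union (hdisjNV _ hU012unit)]
    rw [hNsum]
    have hfin : ∑ z ∈ ((((whitemanD n1 n2 g x 3).image (Nat.cast : ℕ → ZMod (n1 * n2))) ∪ ((whitemanD n1 n2 g x 4).image (Nat.cast : ℕ → ZMod (n1 * n2)))) ∪ ((whitemanD n1 n2 g x 5).image (Nat.cast : ℕ → ZMod (n1 * n2)))), β ^ z.val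
        + ∑ z ∈ ((((whitemanD n1 n2 g x 0).image (Nat.cast : ℕ → ZMod (n1 * n2))) ∪ ((whitemanD n1 n2 g x 1).image (Nat.cast : ℕ → ZMod (n1 * n2)))) ∪ ((whitemanD n1 n2 g x 2).image (Nat.cast : ℕ → ZMod (n1 * n2)))), β ^ z.val = 1 := by
      rw [← Finset.sum_union hdisjU.symm]
      rw [Finset.union_comm]
      exact hUsum
    have h9 : ∀ A B : K, A + B = 1 → -1 + A + (-1 + B) = -1 := by
      intro A B h
      linear_combination h
    exact h9 _ _ hfin
  refine ⟨by linear_combination hkey, ?_, ?_⟩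
  · intro h0
    rw [h0, zero_pow (pow_ne_zero 3 (by omega)), add_zero] at hkey
    exact one_ne_zero (α := K) (by linear_combination hkey)
  · intro h1
    rw [h1] at hkey
    have h2 : ((-1 : K)) ^ q ^ 3 = 0 := by linear_combination hkey
    exact pow_ne_zero _ (neg_ne_zero.mpr one_ne_zero) h2
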